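/- Let k be an integer with 0 ≤ k ≤ m-1, and define a = 2γ^(3k)/3, b = 1/3, c = -γ^(3k)/3 in F_q. Then the map g : F_q → F_q given by g(x) = a·x^(3m-1) + b·x^(2m+1) + c·x^(2m-1) + b·x^(m+1) + c·x^(m-1) + b·x is a bijection of F_q, satisfies g(g(x)) = x for all x ∈ F_q, and the set {x ∈ F_q : g(x) = x} has exactly m+1 elements. -/

import Mathlib

theorem stmt12 (q m : ℕ) (F : Type*) [Field F] [Fintype F]
    (hq : Fintype.card F = q) (hodd : Odd q) (hq3 : q % 3 = 1)
    (hm : m = (q - 1) / 3)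
    (γ : Fˣ) (hγ : ∀ x : Fˣ, x ∈ Subgroup.zpowers γ)
    (k : ℕ) (hk : k ≤ m - 1)
    (a b c : F)
    (ha : a = 2 * (γ : F)^(3*k) / 3)
    (hb : b = 1 / 3)
    (hc : c = -(γ : F)^(3*k) / 3)
    (g : F → F)
    (hg : ∀ x : F, g x = a * x^(3*m-1) + b * x^(2*m+1) + c * x^(2*m-1) + b * x^(m+1) + c * x^(m-1) + b * x) :
    Function.Bijective g ∧ (∀ x : F, g (g x) = x) ∧
      {x : F | g x = x}.ncard = m + 1 := by
  classical
  have hq2 : 2 ≤ q := hq ▸ Fintype.one_lt_card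
  have hq7 : 7 ≤ q := by obtain ⟨l, hl⟩ := hodd; omega
  have h3m : 3 * m = q - 1 := by omega
  obtain ⟨e, rfl⟩ : ∃ e, m = e + 2 := ⟨m - 2, by omega⟩
  -- order of γ
  have hord : orderOf γ = 3 * (e + 2) := by
    rw [orderOf_eq_card_of_forall_mem_zpowers hγ, Nat.card_eq_fintype_card, Fintype.card_units, hq]; omega
  have hγ3m : (γ : F) ^ (3 * (e + 2)) = 1 := by
    have h : γ ^ (3 * (e + 2)) = 1 := by rw [← hord]; exact pow_orderOf_eq_one γ
    simpa using congrArg Units.val h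
  -- ω = γ^m has order 3
  have hωord : orderOf (γ ^ (e + 2)) = 3 := by
    rw [orderOf_pow, hord]
    have hg3 : Nat.gcd (3 * (e + 2)) (e + 2) = e + 2 :=
      Nat.gcd_eq_right ⟨3, by ring⟩
    rw [hg3]
    exact Nat.mul_div_cancel 3 (by omega)
  have hω1 : (γ : F) ^ (e + 2) ≠ 1 := by
    intro h
    have h' : (γ ^ (e + 2) : Fˣ) = 1 := Units.ext (by simpa using h)
    have := orderOf_eq_one_iff.mpr h'
    rw [hωord] at this
    omega
  have hωcube : ((γ : F) ^ (e + 2)) ^ 3 = 1 := by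
    rw [← pow_mul, mul_comm]; exact hγ3m
  -- 3 ≠ 0 in F
  have h3 : (3 : F) ≠ 0 := by
    intro h3
    apply hω1
    set w := (γ : F) ^ (e + 2) with hw
    have hcube : (w - 1) ^ 3 = 0 := by
      have hexp : (w - 1) ^ 3 = w ^ 3 - 1 - 3 * (w ^ 2 - w) := by ring
      rw [hexp, hωcube, h3]; ring
    have := pow_eq_zero_iff (n := 3) (by norm_num) |>.mp hcube
    exact sub_eq_zero.mp this
  -- x^{q-1} = 1 for nonzero x
  have hxq : ∀ x : F, x ≠ 0 → (x ^ (e + 2)) ^ 3 = 1 := by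
    intro x hx
    have h := FiniteField.pow_card_sub_one_eq_one x hx
    rw [hq] at h
    rw [← pow_mul, mul_comm (e + 2) 3, h3m]
    exact h
  -- γ^{3k} powers
  have hγne : (γ : F) ^ (3 * k) ≠ 0 := pow_ne_zero _ (Units.ne_zero γ)
  have hGm : ((γ : F) ^ (3 * k)) ^ (e + 2) = 1 := by
    rw [← pow_mul, show 3 * k * (e + 2) = 3 * (e + 2) * k from by ring, pow_mul, hγ3m, one_pow]
  -- main algebraic identity
  have hmain : ∀ x : F, x * g x =
      a * (x ^ (e + 2)) ^ 3 + c * ((x ^ (e + 2)) ^ 2 + x ^ (e + 2))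
        + b * x ^ 2 * ((x ^ (e + 2)) ^ 2 + x ^ (e + 2) + 1) := by
    intro x
    rw [hg]
    rw [show 3 * (e + 2) - 1 = 3 * e + 5 from by omega,
        show 2 * (e + 2) + 1 = 2 * e + 5 from by omega,
        show 2 * (e + 2) - 1 = 2 * e + 3 from by omega,
        show (e + 2) + 1 = e + 3 from by omega,
        show (e + 2) - 1 = e + 1 from by omega]
    ring
  -- classification of g
  have key : ∀ x : F, g x = if x = 0 ∨ x ^ (e + 2) = 1 then x else (γ : F) ^ (3 * k) * x⁻¹ := by
    intro x
    by_cases hx : x = 0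
    · rw [if_pos (Or.inl hx), hx, hg]
      have z : ∀ n : ℕ, n ≠ 0 → (0 : F) ^ n = 0 := fun n hn => zero_pow hn
      rw [z _ (by omega), z _ (by omega), z _ (by omega), z _ (by omega), z _ (by omega)]
      ring
    · by_cases ht : x ^ (e + 2) = 1
      · rw [if_pos (Or.inr ht)]
        have h := hmain x
        rw [ht] at h
        have hxx : x * g x = x * x := by
          rw [h, ha, hb, hc]; field_simp; ring
        exact mul_left_cancel₀ hx hxx
      · rw [if_neg (by tauto)]
        have hc3 := hxq x hx
        have hroot : (x ^ (e + 2)) ^ 2 + x ^ (e + 2) + 1 = 0 := by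
          have hfac : (x ^ (e + 2) - 1) * ((x ^ (e + 2)) ^ 2 + x ^ (e + 2) + 1) = 0 := by
            have : (x ^ (e + 2) - 1) * ((x ^ (e + 2)) ^ 2 + x ^ (e + 2) + 1)
                = (x ^ (e + 2)) ^ 3 - 1 := by ring
            rw [this, hc3]; ring
          rcases mul_eq_zero.mp hfac with h | h
          · exact absurd (sub_eq_zero.mp h) ht
          · exact h
        have h2 : (x ^ (e + 2)) ^ 2 + x ^ (e + 2) = -1 := by linear_combination hroot
        have h := hmain x
        rw [hc3, h2] at h
        have hxx : x * g x = x * ((γ : F) ^ (3 * k) * x⁻¹) := by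
          rw [h, ha, hc]
          field_simp
          ring
        exact mul_left_cancel₀ hx hxx
  -- involution
  have hinv : ∀ x, g (g x) = x := by
    intro x
    by_cases hfix : x = 0 ∨ x ^ (e + 2) = 1
    · rw [key x, if_pos hfix, key x, if_pos hfix]
    · push_neg at hfix
      obtain ⟨hx, ht⟩ := hfix
      have hgx : g x = (γ : F) ^ (3 * k) * x⁻¹ := by rw [key x, if_neg (by tauto)]
      have hgx0 : g x ≠ 0 := by
        rw [hgx]; exact mul_ne_zero hγne (inv_ne_zero hx)
      have hgxm : (g x) ^ (e + 2) ≠ 1 := by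
        rw [hgx, mul_pow, hGm, one_mul, inv_pow]
        intro h
        exact ht (by rw [← inv_inv (x ^ (e + 2)), h, inv_one])
      rw [key (g x), if_neg (by tauto), hgx]
      field_simp
  -- fixed point set
  have h0 : (0 : F) ∉ Polynomial.nthRootsFinset (e + 2) (1 : F) := by
    rw [Polynomial.mem_nthRootsFinset (by omega)]
    simp [zero_pow]
  have hset : {x : F | g x = x} = ↑(insert (0 : F) (Polynomial.nthRootsFinset (e + 2) (1 : F))) := by
    ext x
    simp only [Set.mem_setOf_eq, Finset.coe_insert, Set.mem_insert_iff, Finset.mem_coe,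
      Polynomial.mem_nthRootsFinset (show 0 < e + 2 from by omega)]
    constructor
    · intro hgx
      by_contra hcon
      push_neg at hcon
      obtain ⟨hx, ht⟩ := hcon
      rw [key x, if_neg (by tauto)] at hgx
      have hx2 : x ^ 2 = (γ : F) ^ (3 * k) := by
        have h := congrArg (· * x) hgx
        rw [mul_assoc, inv_mul_cancel₀ hx, mul_one, ← pow_two] at h
        exact h.symm
      have ht2 : (x ^ (e + 2)) ^ 2 = 1 := by
        have h1 : (x ^ 2) ^ (e + 2) = 1 := by rw [hx2]; exact hGm
        calc (x ^ (e + 2)) ^ 2 = (x ^ 2) ^ (e + 2) := by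
              rw [← pow_mul, ← pow_mul, mul_comm]
          _ = 1 := h1
      have ht3 := hxq x hx
      rw [show (3 : ℕ) = 2 + 1 from rfl, pow_succ, ht2, one_mul] at ht3
      exact ht ht3
    · rintro (rfl | h1)
      · rw [key, if_pos (Or.inl rfl)]
      · rw [key, if_pos (Or.inr h1)]
  -- primitive root and count
  have hprimord : orderOf (γ ^ 3) = e + 2 := by
    rw [orderOf_pow, hord]
    have hg3 : Nat.gcd (3 * (e + 2)) 3 = 3 := Nat.gcd_eq_right ⟨e + 2, rfl⟩
    rw [hg3]
    omega
  have hprimu : IsPrimitiveRoot (γ ^ 3) (e + 2) := by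
    have := IsPrimitiveRoot.orderOf (γ ^ 3)
    rwa [hprimord] at this
  have hprim : IsPrimitiveRoot ((γ : F) ^ 3) (e + 2) := by
    have := IsPrimitiveRoot.coe_units_iff.mpr hprimu
    simpa using this
  refine ⟨Function.Involutive.bijective hinv, hinv, ?_⟩
  rw [hset, Set.ncard_coe_finset, Finset.card_insert_of_notMem h0,
    hprim.card_nthRootsFinset]
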